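/- For each n, let U_n(x) = -α x_n² - (θ + α Σ_{m≠n} x_m) x_n + δ_n with α > 0, with each action set a nonempty compact interval. Then the game admits at most one pure-strategy Nash equilibrium (and hence exactly one). -/

import Mathlib

open Finset

theorem stmt_2 (n : ℕ) (α θ : ℝ) (δ xmin xmax : Fin n → ℝ) (hα : 0 < α)
    (hx : ∀ i, xmin i ≤ xmax i)
    (U : Fin n → (Fin n → ℝ) → ℝ)
    (hU : U = fun i x => -α * (x i) ^ 2 - (θ + α * ∑ m ∈ univ.erase i, x m) * (x i) + δ i)
    (x y : Fin n → ℝ)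
    (hxΩ : ∀ i, x i ∈ Set.Icc (xmin i) (xmax i))
    (hyΩ : ∀ i, y i ∈ Set.Icc (xmin i) (xmax i))
    (hxNE : ∀ i, ∀ z ∈ Set.Icc (xmin i) (xmax i), U i (Function.update x i z) ≤ U i x)
    (hyNE : ∀ i, ∀ z ∈ Set.Icc (xmin i) (xmax i), U i (Function.update y i z) ≤ U i y) :
    x = y := by
  subst hU
  have hupd : ∀ (w : Fin n → ℝ) (i : Fin n) (z : ℝ),
      ∑ m ∈ univ.erase i, Function.update w i z m = ∑ m ∈ univ.erase i, w m := by
    intro w i z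
    exact Finset.sum_congr rfl fun m hm =>
      Function.update_of_ne (Finset.ne_of_mem_erase hm) _ _
  have key : ∀ i, (x i - y i) ^ 2 / 2 + (∑ j, (x j - y j)) * (x i - y i) ≤ 0 := by
    intro i
    have hxi := hxΩ i
    have hyi := hyΩ i
    have hz1 : (3 * x i + y i) / 4 ∈ Set.Icc (xmin i) (xmax i) := by
      constructor <;> [skip; skip] <;>
        · simp only [Set.mem_Icc] at hxi hyi; linarith [hxi.1, hxi.2, hyi.1, hyi.2]
    have hz2 : (3 * y i + x i) / 4 ∈ Set.Icc (xmin i) (xmax i) := by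
      constructor <;> [skip; skip] <;>
        · simp only [Set.mem_Icc] at hxi hyi; linarith [hxi.1, hxi.2, hyi.1, hyi.2]
    have h1 := hxNE i _ hz1
    have h2 := hyNE i _ hz2
    simp only [Function.update_self, hupd] at h1 h2
    have hex : ∑ m ∈ univ.erase i, x m = (∑ j, x j) - x i :=
      Finset.sum_erase_eq_sub (Finset.mem_univ i)
    have hey : ∑ m ∈ univ.erase i, y m = (∑ j, y j) - y i :=
      Finset.sum_erase_eq_sub (Finset.mem_univ i)
    rw [hex] at h1
    rw [hey] at h2
    have hsum : ∑ j, (x j - y j) = (∑ j, x j) - (∑ j, y j) := Finset.sum_sub_distrib _ _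
    rw [hsum]
    nlinarith [h1, h2, hα]
  have hsumle : (∑ i, (x i - y i) ^ 2 / 2) + (∑ j, (x j - y j)) * (∑ i, (x i - y i)) ≤ 0 := by
    have := Finset.sum_le_sum (fun i (_ : i ∈ univ) => key i)
    simpa [Finset.sum_add_distrib, ← Finset.mul_sum] using this
  have hnn : (0:ℝ) ≤ ∑ i, (x i - y i) ^ 2 / 2 :=
    Finset.sum_nonneg fun i _ => by positivity
  have hD : (0:ℝ) ≤ (∑ j, (x j - y j)) * (∑ i, (x i - y i)) := mul_self_nonneg _
  have hzero : ∑ i, (x i - y i) ^ 2 / 2 = 0 := le_antisymm (by linarith) hnn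
  funext i
  have := (Finset.sum_eq_zero_iff_of_nonneg (fun i _ => by positivity)).mp hzero i (Finset.mem_univ i)
  have : (x i - y i) ^ 2 = 0 := by linarith
  have := pow_eq_zero_iff (n := 2) (by norm_num) |>.mp this
  linarith
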